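/- If n or m is even and n, m ≥ 3, then the direct product Kₙ × K_m has total chromatic number (n−1)(m−1) + 1. -/

import Mathlib

open SimpleGraph

variable {V : Type*} {W : Type*}

/-- The direct (tensor) product of two simple graphs. -/
def tensorProd (G : SimpleGraph V) (H : SimpleGraph W) : SimpleGraph (V × W) where
  Adj a b := G.Adj a.1 b.1 ∧ H.Adj a.2 b.2
  symm := ⟨fun _ _ h => ⟨h.1.symm, h.2.symm⟩⟩
  loopless := ⟨fun _ h => h.1.ne rfl⟩

instance tensorProd.adjDecidable (G : SimpleGraph V) (H : SimpleGraph W)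
    [DecidableRel G.Adj] [DecidableRel H.Adj] : DecidableRel (tensorProd G H).Adj :=
  fun _ _ => instDecidableAnd

/-- A proper edge colouring with `n` colours, given as a symmetric function on adjacent pairs. -/
def IsEdgeColoring (G : SimpleGraph V) (n : ℕ) (ce : V → V → Fin n) : Prop :=
  (∀ u v, G.Adj u v → ce u v = ce v u) ∧
  (∀ u v w, G.Adj u v → G.Adj u w → v ≠ w → ce u v ≠ ce u w)

/-- A proper total colouring with `n` colours. -/
def IsTotalColoring (G : SimpleGraph V) (n : ℕ) (cv : V → Fin n) (ce : V → V → Fin n) : Prop :=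
  (∀ u v, G.Adj u v → ce u v = ce v u) ∧
  (∀ u v, G.Adj u v → cv u ≠ cv v) ∧
  (∀ u v w, G.Adj u v → G.Adj u w → v ≠ w → ce u v ≠ ce u w) ∧
  (∀ u v, G.Adj u v → ce u v ≠ cv u ∧ ce u v ≠ cv v)

/-- The total chromatic number of a graph. -/
noncomputable def totalChromaticNumber (G : SimpleGraph V) : ℕ :=
  sInf {n | ∃ cv ce, IsTotalColoring G n cv ce}

/-- Adjacency of the crown graph. -/
def crownAdj {m : ℕ} : Fin m ⊕ Fin m → Fin m ⊕ Fin m → Prop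
  | Sum.inl k, Sum.inr t => k ≠ t
  | Sum.inr k, Sum.inl t => k ≠ t
  | _, _ => False

/-- The crown graph `J_{2m}`: `K_{m,m}` minus a perfect matching. -/
def crown (m : ℕ) : SimpleGraph (Fin m ⊕ Fin m) where
  Adj := crownAdj
  symm := by constructor; rintro (k|k) (t|t) h <;> simp only [crownAdj] at * <;> exact fun e => h e.symm
  loopless := by constructor; rintro (k|k) h <;> simp only [crownAdj] at h

instance crown.adjDecidable (m : ℕ) : DecidableRel (crown m).Adj := fun a b =>
  match a, b with
  | Sum.inl k, Sum.inr t => (inferInstance : Decidable (k ≠ t))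
  | Sum.inr k, Sum.inl t => (inferInstance : Decidable (k ≠ t))
  | Sum.inl _, Sum.inl _ => isFalse (fun h => h)
  | Sum.inr _, Sum.inr _ => isFalse (fun h => h)




namespace KTKaux

/-- multiply by the inverse of 2 mod p, and reduce. -/
def ae (p a : ℕ) : ℕ := (a * ((p+1)/2)) % p

lemma two_h {p : ℕ} (hp : Odd p) : 2 * ((p+1)/2) = p + 1 := by
  obtain ⟨k, rfl⟩ := hp; omega

lemma modeq_eq {p y y' : ℕ} (hy : y < p) (hy' : y' < p) (h : y ≡ y' [MOD p]) : y = y' := by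
  unfold Nat.ModEq at h
  rwa [Nat.mod_eq_of_lt hy, Nat.mod_eq_of_lt hy'] at h

lemma mulp1 (p x : ℕ) : x * (p+1) ≡ x [MOD p] := by
  show (x*(p+1)) % p = x % p
  rw [show x*(p+1) = p*x + x by ring, Nat.mul_add_mod]

lemma two_cancel {p y y' : ℕ} (hp : Odd p) (h : 2*y ≡ 2*y' [MOD p]) : y ≡ y' [MOD p] := by
  have h3 := h.mul_right ((p+1)/2)
  rw [show 2*y*((p+1)/2) = y*(2*((p+1)/2)) by ring,
      show 2*y'*((p+1)/2) = y'*(2*((p+1)/2)) by ring, two_h hp] at h3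
  exact (mulp1 p y).symm.trans (h3.trans (mulp1 p y'))

lemma ae_modeq {p a b : ℕ} (hp : Odd p) (h : ae p a = ae p b) : a ≡ b [MOD p] := by
  have ha : a * ((p+1)/2) ≡ b * ((p+1)/2) [MOD p] := h
  have h3 := ha.mul_right 2
  rw [show a*((p+1)/2)*2 = a*(2*((p+1)/2)) by ring,
      show b*((p+1)/2)*2 = b*(2*((p+1)/2)) by ring, two_h hp] at h3
  exact (mulp1 p a).symm.trans (h3.trans (mulp1 p b))

lemma ae_congr {p a b : ℕ} (h : a ≡ b [MOD p]) : ae p a = ae p b := h.mul_right _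

lemma ae_lt {p : ℕ} (hp : 0 < p) (a : ℕ) : ae p a < p := Nat.mod_lt _ hp

lemma ae_two {p x : ℕ} (hp : Odd p) (hx : x < p) : ae p (x+x) = x := by
  have hp0 : 0 < p := hp.pos
  refine modeq_eq (ae_lt hp0 _) hx ?_
  have h1 : ae p (x+x) ≡ (x+x) * ((p+1)/2) [MOD p] := Nat.mod_modEq _ p
  have h2 : (x+x) * ((p+1)/2) = x * (p+1) := by
    rw [show (x+x)*((p+1)/2) = x*(2*((p+1)/2)) by ring, two_h hp]
  rw [h2] at h1
  exact h1.trans (mulp1 p x)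

/-- idempotent Latin square of order `n` (diagonal `lam n x x = x`), for `n ≥ 3`. -/
def lam (n x y : ℕ) : ℕ :=
  if n % 2 = 1 then ae n (x + y)
  else if x = n-1 then (if y = n-1 then n-1 else ae (n-1) (y + y + (n-2)))
  else if y = n-1 then ae (n-1) (x + (x+1) % (n-1))
  else if y = (x+1) % (n-1) then n-1
  else ae (n-1) (x + y)

section lamsec
variable {n : ℕ} (hn : 3 ≤ n)
include hn

lemma lam_lt {x y : ℕ} (hx : x < n) (hy : y < n) : lam n x y < n := by
  unfold lam
  have h1 : 0 < n := by omega
  have h2 : 0 < n - 1 := by omega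
  have h3 : n - 1 < n := by omega
  split_ifs <;> first | exact ae_lt h1 _ | exact h3 | exact lt_of_lt_of_le (ae_lt h2 _) (by omega)

lemma lam_diag {x : ℕ} (hx : x < n) : lam n x x = x := by
  unfold lam
  rcases Nat.even_or_odd n with he | ho
  · obtain ⟨k, hk⟩ := he
    have hn2 : n % 2 ≠ 1 := by omega
    have hpodd : Odd (n-1) := ⟨k-1, by omega⟩
    rw [if_neg hn2]
    by_cases hx1 : x = n - 1
    · rw [if_pos hx1, if_pos hx1, hx1]
    · rw [if_neg hx1, if_neg hx1]
      have hxp : x < n - 1 := by omega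
      have hne : x ≠ (x+1) % (n-1) := by
        intro hcon
        have h1 : (x+1) % (n-1) ≡ x + 1 [MOD (n-1)] := Nat.mod_modEq _ _
        rw [← hcon] at h1
        have h2 : x + 1 ≡ x + 0 [MOD (n-1)] := by simpa using h1.symm
        have h3 : (1:ℕ) ≡ 0 [MOD (n-1)] := by
          have := Nat.ModEq.add_left_cancel' x h2
          simpa using this
        have := modeq_eq (show 1 < n-1 by omega) (show 0 < n-1 by omega) h3
        omega
      rw [if_neg hne]
      exact ae_two hpodd hxp
  · have hn2 : n % 2 = 1 := Nat.odd_iff.mp ho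
    rw [if_pos hn2]
    exact ae_two ho hx

end lamsec

lemma add_p_modeq (p a : ℕ) : a + p ≡ a [MOD p] := Nat.add_mod_right a p

section lamsec2
variable {n : ℕ} (hn : 3 ≤ n)
include hn

lemma lam_row_inj {x y y' : ℕ} (hx : x < n) (hy : y < n) (hy' : y' < n)
    (h : lam n x y = lam n x y') : y = y' := by
  unfold lam at h
  rcases Nat.even_or_odd n with he | ho
  · obtain ⟨k, hk⟩ := he
    have hn2 : n % 2 ≠ 1 := by omega
    have hp : Odd (n-1) := ⟨k-1, by omega⟩
    have h0p : 0 < n - 1 := by omega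
    have hm1 : (x+1) % (n-1) < n-1 := Nat.mod_lt _ h0p
    have hm2 : (y+1) % (n-1) < n-1 := Nat.mod_lt _ h0p
    rw [if_neg hn2, if_neg hn2] at h
    by_cases hxp : x = n-1
    · rw [if_pos hxp, if_pos hxp] at h
      by_cases hyp : y = n-1 <;> by_cases hyp' : y' = n-1
      · omega
      · rw [if_pos hyp, if_neg hyp'] at h
        have := ae_lt h0p (y' + y' + (n-2)); omega
      · rw [if_neg hyp, if_pos hyp'] at h
        have := ae_lt h0p (y + y + (n-2)); omega
      · rw [if_neg hyp, if_neg hyp'] at h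
        have h1 := (ae_modeq hp h).add_right_cancel' (n-2)
        rw [← two_mul, ← two_mul] at h1
        exact modeq_eq (by omega) (by omega) (two_cancel hp h1)
    · rw [if_neg hxp, if_neg hxp] at h
      by_cases hyp : y = n-1 <;> by_cases hyp' : y' = n-1
      · omega
      · rw [if_pos hyp, if_neg hyp'] at h
        by_cases hyh : y' = (x+1) % (n-1)
        · rw [if_pos hyh] at h
          have := ae_lt h0p (x + (x+1) % (n-1)); omega
        · rw [if_neg hyh] at h
          have h1 := Nat.ModEq.add_left_cancel' x (ae_modeq hp h)
          exact absurd (modeq_eq hm1 (by omega) h1).symm hyh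
      · rw [if_neg hyp, if_pos hyp'] at h
        by_cases hyh : y = (x+1) % (n-1)
        · rw [if_pos hyh] at h
          have := ae_lt h0p (x + (x+1) % (n-1)); omega
        · rw [if_neg hyh] at h
          have h1 := Nat.ModEq.add_left_cancel' x (ae_modeq hp h.symm)
          exact absurd (modeq_eq hm1 (by omega) h1).symm hyh
      · rw [if_neg hyp, if_neg hyp'] at h
        by_cases hyh : y = (x+1) % (n-1) <;> by_cases hyh' : y' = (x+1) % (n-1)
        · omega
        · rw [if_pos hyh, if_neg hyh'] at h
          have := ae_lt h0p (x + y'); omega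
        · rw [if_neg hyh, if_pos hyh'] at h
          have := ae_lt h0p (x + y); omega
        · rw [if_neg hyh, if_neg hyh'] at h
          have h1 := Nat.ModEq.add_left_cancel' x (ae_modeq hp h)
          exact modeq_eq (by omega) (by omega) h1
  · have hn2 : n % 2 = 1 := Nat.odd_iff.mp ho
    rw [if_pos hn2, if_pos hn2] at h
    have h1 := Nat.ModEq.add_left_cancel' x (ae_modeq ho h)
    exact modeq_eq hy hy' h1

lemma lam_col_inj {x y y' : ℕ} (hx : x < n) (hy : y < n) (hy' : y' < n)
    (h : lam n y x = lam n y' x) : y = y' := by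
  unfold lam at h
  rcases Nat.even_or_odd n with he | ho
  · obtain ⟨k, hk⟩ := he
    have hn2 : n % 2 ≠ 1 := by omega
    have hp : Odd (n-1) := ⟨k-1, by omega⟩
    have h0p : 0 < n - 1 := by omega
    rw [if_neg hn2, if_neg hn2] at h
    by_cases hxp : x = n-1
    · -- second argument is the "infinity" column
      by_cases hyp : y = n-1 <;> by_cases hyp' : y' = n-1
      · omega
      · rw [if_pos hyp, if_neg hyp', if_pos hxp, if_pos hxp] at h
        have := ae_lt h0p (y' + (y'+1) % (n-1)); omega
      · rw [if_neg hyp, if_pos hyp', if_pos hxp, if_pos hxp] at h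
        have := ae_lt h0p (y + (y+1) % (n-1)); omega
      · rw [if_neg hyp, if_neg hyp', if_pos hxp, if_pos hxp] at h
        have e1 : y + (y+1) % (n-1) ≡ y + (y+1) [MOD (n-1)] :=
          Nat.ModEq.add_left y (Nat.mod_modEq _ _)
        have e2 : y' + (y'+1) % (n-1) ≡ y' + (y'+1) [MOD (n-1)] :=
          Nat.ModEq.add_left y' (Nat.mod_modEq _ _)
        have h1 : y + (y+1) ≡ y' + (y'+1) [MOD (n-1)] :=
          (e1.symm.trans (ae_modeq hp h)).trans e2
        rw [show y + (y+1) = 2*y + 1 by ring, show y' + (y'+1) = 2*y' + 1 by ring] at h1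
        exact modeq_eq (by omega) (by omega) (two_cancel hp (h1.add_right_cancel' 1))
    · by_cases hyp : y = n-1 <;> by_cases hyp' : y' = n-1
      · omega
      · rw [if_pos hyp, if_neg hyp', if_neg hxp, if_neg hxp] at h
        by_cases hyh : x = (y'+1) % (n-1)
        · rw [if_pos hyh] at h
          have := ae_lt h0p (x + x + (n-2)); omega
        · rw [if_neg hyh] at h
          -- h : ae (x+x+(n-2)) = ae (y'+x); derive x ≡ y'+1, contradiction with hyh
          have h1 := ae_modeq hp h
          have h2 := h1.add_right 2
          rw [show x + x + (n-2) + 2 = (x + (x+1)) + (n-1) by omega] at h2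
          have h3 : (x + (x+1)) ≡ y' + x + 2 [MOD (n-1)] :=
            (add_p_modeq (n-1) _).symm.trans h2
          rw [show x + (x+1) = x + 1 + x by ring, show y' + x + 2 = (y' + 2) + x by ring] at h3
          have h4 := h3.add_right_cancel' x
          have h5 : x ≡ y' + 1 [MOD (n-1)] := by
            have := h4.add_right_cancel' 1
            simpa using this
          have h6 : (y'+1) % (n-1) = x :=
            modeq_eq (Nat.mod_lt _ h0p) (by omega) ((Nat.mod_modEq _ _).trans h5.symm)
          exact absurd h6.symm hyh
      · rw [if_neg hyp, if_pos hyp', if_neg hxp, if_neg hxp] at h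
        by_cases hyh : x = (y+1) % (n-1)
        · rw [if_pos hyh] at h
          have := ae_lt h0p (x + x + (n-2)); omega
        · rw [if_neg hyh] at h
          have h1 := ae_modeq hp h.symm
          have h2 := h1.add_right 2
          rw [show x + x + (n-2) + 2 = (x + (x+1)) + (n-1) by omega] at h2
          have h3 : (x + (x+1)) ≡ y + x + 2 [MOD (n-1)] :=
            (add_p_modeq (n-1) _).symm.trans h2
          rw [show x + (x+1) = x + 1 + x by ring, show y + x + 2 = (y + 2) + x by ring] at h3
          have h4 := h3.add_right_cancel' x
          have h5 : x ≡ y + 1 [MOD (n-1)] := by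
            have := h4.add_right_cancel' 1
            simpa using this
          have h6 : (y+1) % (n-1) = x :=
            modeq_eq (Nat.mod_lt _ h0p) (by omega) ((Nat.mod_modEq _ _).trans h5.symm)
          exact absurd h6.symm hyh
      · rw [if_neg hyp, if_neg hyp', if_neg hxp, if_neg hxp] at h
        by_cases hyh : x = (y+1) % (n-1) <;> by_cases hyh' : x = (y'+1) % (n-1)
        · -- (y+1)%p = (y'+1)%p → y = y'
          have h1 : (y+1) ≡ (y'+1) [MOD (n-1)] :=
            ((Nat.mod_modEq _ _).symm.trans (by rw [← hyh, hyh'])).trans (Nat.mod_modEq _ _)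
          exact modeq_eq (by omega) (by omega) (h1.add_right_cancel' 1)
        · rw [if_pos hyh, if_neg hyh'] at h
          have := ae_lt h0p (y' + x); omega
        · rw [if_neg hyh, if_pos hyh'] at h
          have := ae_lt h0p (y + x); omega
        · rw [if_neg hyh, if_neg hyh'] at h
          exact modeq_eq (by omega) (by omega) ((ae_modeq hp h).add_right_cancel' x)
  · have hn2 : n % 2 = 1 := Nat.odd_iff.mp ho
    rw [if_pos hn2, if_pos hn2] at h
    exact modeq_eq hy hy' ((ae_modeq ho h).add_right_cancel' x)

end lamsec2

/-- layer (1-factorization of `K_m`, `m` even, on columns). -/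
def ib (m c t : ℕ) : ℕ := if c = m-1 then t else if t = m-1 then c else ae (m-1) (c+t)

/-- cyclic difference of rows. -/
def dd (n i j : ℕ) : ℕ := (j + n - i) % n

section ibsec
variable {m : ℕ} (hm : 4 ≤ m) (hq : Odd (m-1))
include hm

lemma ib_symm (c t : ℕ) : ib m c t = ib m t c := by
  unfold ib
  split_ifs <;> first | omega | rw [Nat.add_comm]

lemma ib_lt {c t : ℕ} (hc : c < m) (ht : t < m) (hne : c ≠ t) : ib m c t < m-1 := by
  unfold ib
  split_ifs with h1 h2
  · omega
  · omega
  · exact ae_lt (by omega) _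

include hq in
lemma ib_inj {c t s : ℕ} (hc : c < m) (ht : t < m) (hs : s < m)
    (htc : t ≠ c) (hsc : s ≠ c) (h : ib m c t = ib m c s) : t = s := by
  unfold ib at h
  by_cases hcm : c = m-1
  · rwa [if_pos hcm, if_pos hcm] at h
  · rw [if_neg hcm, if_neg hcm] at h
    have hcq : c < m-1 := by omega
    by_cases htm : t = m-1 <;> by_cases hsm : s = m-1
    · omega
    · rw [if_pos htm, if_neg hsm] at h
      have h2 : ae (m-1) (c+c) = ae (m-1) (c+s) := by rw [ae_two hq hcq]; exact h
      have h3 := Nat.ModEq.add_left_cancel' c (ae_modeq hq h2)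
      exact absurd (modeq_eq hcq (by omega) h3).symm hsc
    · rw [if_neg htm, if_pos hsm] at h
      have h2 : ae (m-1) (c+c) = ae (m-1) (c+t) := by rw [ae_two hq hcq]; exact h.symm
      have h3 := Nat.ModEq.add_left_cancel' c (ae_modeq hq h2)
      exact absurd (modeq_eq hcq (by omega) h3).symm (by omega)
    · rw [if_neg htm, if_neg hsm] at h
      exact modeq_eq (by omega) (by omega)
        (Nat.ModEq.add_left_cancel' c (ae_modeq hq h))

end ibsec

section ddsec
variable {n : ℕ}

lemma dd_lt (h0 : 0 < n) (i j : ℕ) : dd n i j < n := Nat.mod_lt _ h0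

lemma dd_pos {i j : ℕ} (hi : i < n) (hj : j < n) (hne : i ≠ j) : dd n i j ≠ 0 := by
  intro h0
  have h1 : j + n - i ≡ 0 [MOD n] := by
    unfold Nat.ModEq; simpa [Nat.zero_mod, dd] using h0
  have h2 := h1.add_right i
  rw [show j + n - i + i = j + n by omega, show 0 + i = i by omega] at h2
  have h3 : j ≡ i [MOD n] := (add_p_modeq n j).symm.trans h2
  exact hne (modeq_eq hj hi h3).symm

lemma dd_inj_right {i j j' : ℕ} (hi : i < n) (hj : j < n) (hj' : j' < n)
    (h : dd n i j = dd n i j') : j = j' := by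
  have h1 : j + n - i ≡ j' + n - i [MOD n] := h
  have h2 := h1.add_right i
  rw [show j + n - i + i = j + n by omega, show j' + n - i + i = j' + n by omega] at h2
  exact modeq_eq hj hj' (h2.add_right_cancel' n)

lemma dd_inj_left {i i' j : ℕ} (hi : i < n) (hi' : i' < n) (hj : j < n)
    (h : dd n i j = dd n i' j) : i = i' := by
  have h1 : j + n - i ≡ j + n - i' [MOD n] := h
  have h2 := h1.add_right (i + i')
  rw [show j + n - i + (i + i') = i' + (j + n) by omega,
      show j + n - i' + (i + i') = i + (j + n) by omega] at h2
  exact (modeq_eq hi' hi (h2.add_right_cancel' (j+n))).symm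

end ddsec

lemma enc_inj {k b b' e e' : ℕ} (hk : 0 < k) (he : e < k) (he' : e' < k)
    (h : b*k + e = b'*k + e') : b = b' ∧ e = e' := by
  have h1 : (b*k+e) % k = e := by
    rw [mul_comm, Nat.mul_add_mod, Nat.mod_eq_of_lt he]
  have h2 : (b'*k+e') % k = e' := by
    rw [mul_comm, Nat.mul_add_mod, Nat.mod_eq_of_lt he']
  have h3 : (b*k+e) / k = b := by
    rw [add_comm, Nat.add_mul_div_right _ _ hk, Nat.div_eq_of_lt he, Nat.zero_add]
  have h4 : (b'*k+e') / k = b' := by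
    rw [add_comm, Nat.add_mul_div_right _ _ hk, Nat.div_eq_of_lt he', Nat.zero_add]
  constructor
  · rw [← h3, ← h4, h]
  · rw [← h1, ← h2, h]

/-- the edge colour of an edge from `(i,c)` to `(j,t)` where `c` is the smaller column. -/
def F (n m i c j t : ℕ) : ℕ :=
  if ib m c t = 0 then lam n i j else n + (ib m c t - 1)*(n-1) + (dd n i j - 1)

section mainsec
variable {n m : ℕ} (hn : 3 ≤ n) (hm : 4 ≤ m) (hq : Odd (m-1))
include hn hm

lemma n_le_N : n ≤ (n-1)*(m-1)+1 := by
  have h : (n-1)*3 ≤ (n-1)*(m-1) := Nat.mul_le_mul_left _ (by omega)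
  omega

lemma F_lt {i c j t : ℕ} (hi : i < n) (hj : j < n) (hij : i ≠ j)
    (hc : c < m) (ht : t < m) (hct : c ≠ t) : F n m i c j t < (n-1)*(m-1)+1 := by
  unfold F
  split_ifs with hb
  · exact lt_of_lt_of_le (lam_lt hn hi hj) (n_le_N hn hm)
  · have hblt : ib m c t < m-1 := ib_lt hm hc ht hct
    have hd1 : dd n i j ≠ 0 := dd_pos hi hj hij
    have hd2 : dd n i j < n := dd_lt (by omega) i j
    have h1 : (ib m c t - 1)*(n-1) ≤ (m-3)*(n-1) :=
      Nat.mul_le_mul_right _ (by omega)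
    have h2 : (m-3)*(n-1) + 2*(n-1) = (m-1)*(n-1) := by
      rw [← add_mul]; congr 1; omega
    have h3 : (m-1)*(n-1) = (n-1)*(m-1) := mul_comm _ _
    omega

include hq

lemma F_layer {i c j t i' c' j' t' : ℕ} (hi : i < n) (hj : j < n) (hij : i ≠ j)
    (hi' : i' < n) (hj' : j' < n) (hij' : i' ≠ j')
    (h : F n m i c j t = F n m i' c' j' t') : ib m c t = ib m c' t' := by
  unfold F at h
  split_ifs at h with hb hb' hb'
  · rw [hb, hb']
  · have := lam_lt hn hi hj; omega
  · have := lam_lt hn hi' hj'; omega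
  · have hd1 : dd n i j ≠ 0 := dd_pos hi hj hij
    have hd2 : dd n i j < n := dd_lt (by omega) i j
    have hd1' : dd n i' j' ≠ 0 := dd_pos hi' hj' hij'
    have hd2' : dd n i' j' < n := dd_lt (by omega) i' j'
    have h0 : (ib m c t - 1)*(n-1) + (dd n i j - 1)
        = (ib m c' t' - 1)*(n-1) + (dd n i' j' - 1) := by omega
    have := (enc_inj (show 0 < n-1 by omega) (by omega) (by omega) h0).1
    omega

lemma F_inj_core {i c j t j' t' : ℕ} (hi : i < n) (hj : j < n) (hij : i ≠ j)
    (hj' : j' < n) (hij' : i ≠ j') (hc : c < m) (ht : t < m) (ht' : t' < m)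
    (htc : t ≠ c) (htc' : t' ≠ c)
    (h : F n m i c j t = F n m i c j' t') : j = j' ∧ t = t' := by
  have hL : ib m c t = ib m c t' :=
    F_layer hn hm hq hi hj hij hi hj' hij' h
  have htt : t = t' := ib_inj hm hq hc ht ht' htc htc' hL
  subst htt
  refine ⟨?_, rfl⟩
  unfold F at h
  split_ifs at h with hb
  · exact lam_row_inj hn hi hj hj' h
  · have hd1 : dd n i j ≠ 0 := dd_pos hi hj hij
    have hd2 : dd n i j < n := dd_lt (by omega) i j
    have hd1' : dd n i j' ≠ 0 := dd_pos hi hj' hij'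
    have hd2' : dd n i j' < n := dd_lt (by omega) i j'
    have h0 : dd n i j = dd n i j' := by omega
    exact dd_inj_right hi hj hj' h0

lemma F_inj_last {i c j t j' t' : ℕ} (hi : i < n) (hj : j < n) (hij : j ≠ i)
    (hj' : j' < n) (hij' : j' ≠ i) (hc : c < m) (ht : t < m) (ht' : t' < m)
    (htc : t ≠ c) (htc' : t' ≠ c)
    (h : F n m j t i c = F n m j' t' i c) : j = j' ∧ t = t' := by
  have hL : ib m t c = ib m t' c :=
    F_layer hn hm hq hj hi hij hj' hi hij' h
  rw [ib_symm hm t c, ib_symm hm t' c] at hL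
  have htt : t = t' := ib_inj hm hq hc ht ht' htc htc' hL
  subst htt
  refine ⟨?_, rfl⟩
  unfold F at h
  split_ifs at h with hb
  · exact lam_col_inj hn hi hj hj' h
  · have hd1 : dd n j i ≠ 0 := dd_pos hj hi hij
    have hd2 : dd n j i < n := dd_lt (by omega) j i
    have hd1' : dd n j' i ≠ 0 := dd_pos hj' hi hij'
    have hd2' : dd n j' i < n := dd_lt (by omega) j' i
    have h0 : dd n j i = dd n j' i := by omega
    exact dd_inj_left hj hj' hi h0

omit hq in
lemma F_ne_endpoints {i c j t : ℕ} (hi : i < n) (hj : j < n) (hij : i ≠ j) :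
    F n m i c j t ≠ i ∧ F n m i c j t ≠ j := by
  unfold F
  split_ifs with hb
  · constructor
    · intro hcon
      have : lam n i j = lam n i i := by rw [hcon, lam_diag hn hi]
      exact hij (lam_row_inj hn hi hj hi this).symm
    · intro hcon
      have : lam n i j = lam n j j := by rw [hcon, lam_diag hn hj]
      exact hij (lam_col_inj hn hj hi hj this)
  · omega

end mainsec

def ceN (n m : ℕ) (u v : Fin n × Fin m) : ℕ :=
  if u.2.val < v.2.val then F n m u.1.val u.2.val v.1.val v.2.val
  else F n m v.1.val v.2.val u.1.val u.2.val

section colsec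
variable {n m : ℕ} (hn : 3 ≤ n) (hm : 4 ≤ m) (hq : Odd (m-1))
include hn hm

lemma ceN_lt {u v : Fin n × Fin m} (h1 : u.1 ≠ v.1) (h2 : u.2 ≠ v.2) :
    ceN n m u v < (n-1)*(m-1)+1 := by
  have e1 := Fin.val_ne_of_ne h1
  have e2 := Fin.val_ne_of_ne h2
  unfold ceN; split_ifs with hlt
  · exact F_lt hn hm u.1.isLt v.1.isLt e1 u.2.isLt v.2.isLt e2
  · exact F_lt hn hm v.1.isLt u.1.isLt (Ne.symm e1) v.2.isLt u.2.isLt (Ne.symm e2)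

omit hn hm in
lemma ceN_symm {u v : Fin n × Fin m} (h2 : u.2 ≠ v.2) : ceN n m u v = ceN n m v u := by
  have e2 := Fin.val_ne_of_ne h2
  unfold ceN
  by_cases hlt : u.2.val < v.2.val
  · rw [if_pos hlt, if_neg (by omega)]
  · rw [if_neg hlt, if_pos (by omega)]

include hq

theorem upper_even :
    ∃ cv ce, IsTotalColoring
      (tensorProd (⊤ : SimpleGraph (Fin n)) (⊤ : SimpleGraph (Fin m)))
      ((n-1)*(m-1)+1) cv ce := by
  have hN : 0 < (n-1)*(m-1)+1 := by omega
  refine ⟨fun u => ⟨u.1.val, lt_of_lt_of_le u.1.isLt (n_le_N hn hm)⟩,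
    fun u v => if h : u.1 ≠ v.1 ∧ u.2 ≠ v.2
      then ⟨ceN n m u v, ceN_lt hn hm h.1 h.2⟩ else ⟨0, hN⟩,
    ?_, ?_, ?_, ?_⟩
  · intro u v hadj
    have h1 : u.1 ≠ v.1 := hadj.1.ne
    have h2 : u.2 ≠ v.2 := hadj.2.ne
    dsimp only
    rw [dif_pos ⟨h1, h2⟩, dif_pos ⟨Ne.symm h1, Ne.symm h2⟩]
    simp only [Fin.mk.injEq]
    exact ceN_symm h2
  · intro u v hadj
    simp only [ne_eq, Fin.mk.injEq]
    exact fun e => hadj.1.ne (Fin.val_injective e)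
  · intro u v w hadj1 hadj2 hvw
    have h1 : u.1 ≠ v.1 := hadj1.1.ne
    have h2 : u.2 ≠ v.2 := hadj1.2.ne
    have g1 : u.1 ≠ w.1 := hadj2.1.ne
    have g2 : u.2 ≠ w.2 := hadj2.2.ne
    dsimp only
    rw [dif_pos ⟨h1, h2⟩, dif_pos ⟨g1, g2⟩]
    simp only [ne_eq, Fin.mk.injEq]
    intro hEq
    have e1 := Fin.val_ne_of_ne h1
    have e2 := Fin.val_ne_of_ne h2
    have f1 := Fin.val_ne_of_ne g1
    have f2 := Fin.val_ne_of_ne g2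
    unfold ceN at hEq
    by_cases o1 : u.2.val < v.2.val <;> by_cases o2 : u.2.val < w.2.val
    · rw [if_pos o1, if_pos o2] at hEq
      obtain ⟨ej, et⟩ := F_inj_core hn hm hq u.1.isLt v.1.isLt e1 w.1.isLt f1
        u.2.isLt v.2.isLt w.2.isLt (Ne.symm e2) (Ne.symm f2) hEq
      exact hvw (Prod.ext (Fin.val_injective ej) (Fin.val_injective et))
    · rw [if_pos o1, if_neg o2] at hEq
      have hL := F_layer hn hm hq u.1.isLt v.1.isLt e1 w.1.isLt u.1.isLt
        (Ne.symm f1) hEq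
      rw [ib_symm hm w.2.val u.2.val] at hL
      have := ib_inj hm hq u.2.isLt v.2.isLt w.2.isLt (Ne.symm e2) (Ne.symm f2) hL
      omega
    · rw [if_neg o1, if_pos o2] at hEq
      have hL := F_layer hn hm hq v.1.isLt u.1.isLt (Ne.symm e1) u.1.isLt w.1.isLt
        f1 hEq
      rw [ib_symm hm v.2.val u.2.val] at hL
      have := ib_inj hm hq u.2.isLt v.2.isLt w.2.isLt (Ne.symm e2) (Ne.symm f2) hL
      omega
    · rw [if_neg o1, if_neg o2] at hEq
      obtain ⟨ej, et⟩ := F_inj_last hn hm hq u.1.isLt v.1.isLt (Ne.symm e1)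
        w.1.isLt (Ne.symm f1) u.2.isLt v.2.isLt w.2.isLt (Ne.symm e2) (Ne.symm f2) hEq
      exact hvw (Prod.ext (Fin.val_injective ej) (Fin.val_injective et))
  · intro u v hadj
    have h1 : u.1 ≠ v.1 := hadj.1.ne
    have h2 : u.2 ≠ v.2 := hadj.2.ne
    have e1 := Fin.val_ne_of_ne h1
    dsimp only
    rw [dif_pos ⟨h1, h2⟩]
    constructor <;> simp only [ne_eq, Fin.mk.injEq] <;> unfold ceN <;>
      split_ifs with hlt
    · exact (F_ne_endpoints hn hm u.1.isLt v.1.isLt e1).1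
    · exact (F_ne_endpoints hn hm v.1.isLt u.1.isLt (Ne.symm e1)).2
    · exact (F_ne_endpoints hn hm u.1.isLt v.1.isLt e1).2
    · exact (F_ne_endpoints hn hm v.1.isLt u.1.isLt (Ne.symm e1)).1

end colsec

lemma lower_bound {n m N : ℕ} (hn : 3 ≤ n) (hm : 3 ≤ m)
    (cv : Fin n × Fin m → Fin N) (ce : Fin n × Fin m → Fin n × Fin m → Fin N)
    (h : IsTotalColoring
      (tensorProd (⊤ : SimpleGraph (Fin n)) (⊤ : SimpleGraph (Fin m))) N cv ce) :
    (n-1)*(m-1)+1 ≤ N := by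
  obtain ⟨hsym, hv, hee, hev⟩ := h
  set z1 : Fin n := ⟨0, by omega⟩ with hz1
  set z2 : Fin m := ⟨0, by omega⟩ with hz2
  set u : Fin n × Fin m := (z1, z2) with hu
  set A : Finset (Fin n × Fin m) :=
    (Finset.univ.erase z1) ×ˢ (Finset.univ.erase z2) with hA
  have hadj : ∀ v ∈ A, (tensorProd (⊤ : SimpleGraph (Fin n))
      (⊤ : SimpleGraph (Fin m))).Adj u v := by
    intro v hvA
    rw [hA, Finset.mem_product, Finset.mem_erase, Finset.mem_erase] at hvA
    exact ⟨Ne.symm hvA.1.1, Ne.symm hvA.2.1⟩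
  have hcardA : A.card = (n-1)*(m-1) := by
    rw [hA, Finset.card_product, Finset.card_erase_of_mem (Finset.mem_univ _),
      Finset.card_erase_of_mem (Finset.mem_univ _), Finset.card_univ,
      Finset.card_univ, Fintype.card_fin, Fintype.card_fin]
  have hinj : Set.InjOn (fun v => ce u v) A := by
    intro v hvA w hwA hvw
    by_contra hne
    exact hee u v w (hadj v hvA) (hadj w hwA) hne hvw
  have hcardim : (A.image (fun v => ce u v)).card = (n-1)*(m-1) := by
    rw [Finset.card_image_of_injOn hinj, hcardA]
  have hnotmem : cv u ∉ A.image (fun v => ce u v) := by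
    intro hmem
    obtain ⟨v, hvA, hvEq⟩ := Finset.mem_image.mp hmem
    exact (hev u v (hadj v hvA)).1 hvEq
  have hT : (insert (cv u) (A.image (fun v => ce u v))).card = (n-1)*(m-1)+1 := by
    rw [Finset.card_insert_of_notMem hnotmem, hcardim]
  calc (n-1)*(m-1)+1 = (insert (cv u) (A.image (fun v => ce u v))).card := hT.symm
    _ ≤ Fintype.card (Fin N) := Finset.card_le_univ _
    _ = N := Fintype.card_fin N

lemma transport {n m N : ℕ} {cv : Fin n × Fin m → Fin N}
    {ce : Fin n × Fin m → Fin n × Fin m → Fin N}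
    (h : IsTotalColoring
      (tensorProd (⊤ : SimpleGraph (Fin n)) (⊤ : SimpleGraph (Fin m))) N cv ce) :
    IsTotalColoring
      (tensorProd (⊤ : SimpleGraph (Fin m)) (⊤ : SimpleGraph (Fin n))) N
      (fun u => cv (u.2, u.1)) (fun u v => ce (u.2, u.1) (v.2, v.1)) := by
  obtain ⟨hsym, hv, hee, hev⟩ := h
  have adj' : ∀ {u v : Fin m × Fin n},
      (tensorProd (⊤ : SimpleGraph (Fin m)) (⊤ : SimpleGraph (Fin n))).Adj u v →
      (tensorProd (⊤ : SimpleGraph (Fin n)) (⊤ : SimpleGraph (Fin m))).Adj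
        (u.2, u.1) (v.2, v.1) := fun h => ⟨h.2, h.1⟩
  refine ⟨fun u v h => hsym _ _ (adj' h), fun u v h => hv _ _ (adj' h),
    fun u v w h1 h2 hne => hee _ _ _ (adj' h1) (adj' h2) ?_,
    fun u v h => hev _ _ (adj' h)⟩
  intro e
  exact hne (Prod.ext (congrArg Prod.snd e) (congrArg Prod.fst e))

lemma swap_eq (n m : ℕ) :
    totalChromaticNumber
      (tensorProd (⊤ : SimpleGraph (Fin n)) (⊤ : SimpleGraph (Fin m)))
    = totalChromaticNumber
      (tensorProd (⊤ : SimpleGraph (Fin m)) (⊤ : SimpleGraph (Fin n))) := by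
  unfold totalChromaticNumber
  congr 1
  ext N
  simp only [Set.mem_setOf_eq]
  constructor
  · rintro ⟨cv, ce, h⟩
    exact ⟨_, _, transport h⟩
  · rintro ⟨cv, ce, h⟩
    exact ⟨_, _, transport h⟩

lemma main_even {n m : ℕ} (hn : 3 ≤ n) (hm : 4 ≤ m) (hq : Odd (m-1)) :
    totalChromaticNumber
      (tensorProd (⊤ : SimpleGraph (Fin n)) (⊤ : SimpleGraph (Fin m)))
    = (n-1)*(m-1)+1 := by
  unfold totalChromaticNumber
  obtain ⟨cv, ce, hc⟩ := upper_even hn hm hq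
  refine le_antisymm (Nat.sInf_le ⟨cv, ce, hc⟩)
    (le_csInf ⟨_, ⟨cv, ce, hc⟩⟩ ?_)
  rintro k ⟨cv', ce', h'⟩
  exact lower_bound hn (by omega) cv' ce' h'

end KTKaux

theorem Kn_tensor_Km_typeI (n m : ℕ) (hn : 3 ≤ n) (hm : 3 ≤ m) (he : Even n ∨ Even m) :
    totalChromaticNumber (tensorProd (⊤ : SimpleGraph (Fin n)) (⊤ : SimpleGraph (Fin m))) =
      (n - 1) * (m - 1) + 1 := by
  by_cases hme : Even m
  · obtain ⟨k, hk⟩ := hme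
    exact KTKaux.main_even hn (by omega) ⟨k-1, by omega⟩
  · have hne : Even n := he.resolve_right hme
    obtain ⟨k, hk⟩ := hne
    rw [KTKaux.swap_eq n m, KTKaux.main_even hm (by omega) ⟨k-1, by omega⟩,
      Nat.mul_comm]
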